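/- Let p_1, ..., p_d be positive reals with p_1 + ... + p_d = 1, and let P = {(A_i^{(1)}, ..., A_i^{(d)}) : i in [m]} be a weak Bollobás system of d-tuples of subsets of [n]. Then the sum over i of ∏_{ℓ=1}^d p_ℓ^{|A_i^{(ℓ)}|} is at most 1. -/
import Mathlib


theorem tuza_weak_bollobas (n m d : ℕ) (p : Fin d → ℝ)
    (hp : ∀ ℓ, 0 < p ℓ) (hsum : ∑ ℓ, p ℓ = 1)
    (A : Fin m → Fin d → Finset (Fin n))
    (hdisj : ∀ i, ∀ p q : Fin d, p ≠ q → Disjoint (A i p) (A i q))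
    (hcross : ∀ i j, i < j → ∃ p q : Fin d, p < q ∧
      ((A i p ∩ A j q).Nonempty ∨ (A i q ∩ A j p).Nonempty)) :
    ∑ i, ∏ ℓ, p ℓ ^ (A i ℓ).card ≤ 1 := by
  classical
  set W : (Fin n → Fin d) → ℝ := fun c => ∏ x, p (c x) with hW
  set t : Fin m → Fin n → Finset (Fin d) :=
    fun i x => Finset.univ.filter (fun ℓ => ∀ ℓ', x ∈ A i ℓ' → ℓ = ℓ') with ht
  set E : Fin m → Finset (Fin n → Fin d) := fun i => Fintype.piFinset (t i) with hE
  have hmemE : ∀ i c, c ∈ E i ↔ ∀ ℓ x, x ∈ A i ℓ → c x = ℓ := by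
    intro i c
    simp only [hE, Fintype.mem_piFinset, ht, Finset.mem_filter, Finset.mem_univ, true_and]
    constructor
    · intro h ℓ x hx; exact h x ℓ hx
    · intro h x ℓ' hx'; exact h ℓ' x hx'
  have htval : ∀ i x ℓ₀, x ∈ A i ℓ₀ → t i x = {ℓ₀} := by
    intro i x ℓ₀ hx
    ext ℓ
    simp only [ht, Finset.mem_filter, Finset.mem_univ, true_and, Finset.mem_singleton]
    constructor
    · intro h; exact h ℓ₀ hx
    · intro heq ℓ' hx'
      rw [heq]
      by_contra hne
      exact (Finset.disjoint_left.mp (hdisj i ℓ₀ ℓ' hne) hx) hx'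
  have htuniv : ∀ i x, (∀ ℓ, x ∉ A i ℓ) → t i x = Finset.univ := by
    intro i x hx
    ext ℓ
    simp only [ht, Finset.mem_filter, Finset.mem_univ, true_and, iff_true]
    intro ℓ' hx'
    exact absurd hx' (hx ℓ')
  have hEsum : ∀ i, ∑ c ∈ E i, W c = ∏ ℓ, p ℓ ^ (A i ℓ).card := by
    intro i
    have h1 : ∑ c ∈ E i, W c = ∏ x, ∑ j ∈ t i x, p j := by
      rw [hE]; exact (Finset.prod_univ_sum (t i) (fun _ j => p j)).symm
    rw [h1]
    set S : Finset (Fin n) := Finset.univ.biUnion (fun ℓ => A i ℓ) with hS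
    have h2 : ∏ x, ∑ j ∈ t i x, p j = ∏ x ∈ S, ∑ j ∈ t i x, p j := by
      refine (Finset.prod_subset (Finset.subset_univ S) ?_).symm
      intro x _ hxS
      have hx : ∀ ℓ, x ∉ A i ℓ := by
        intro ℓ hxl
        exact hxS (Finset.mem_biUnion.mpr ⟨ℓ, Finset.mem_univ ℓ, hxl⟩)
      rw [htuniv i x hx, hsum]
    rw [h2, hS, Finset.prod_biUnion (fun a _ b _ hab => hdisj i a b hab)]
    refine Finset.prod_congr rfl ?_
    intro ℓ _
    rw [Finset.prod_congr rfl (fun x hx => by rw [htval i x ℓ hx, Finset.sum_singleton]),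
      Finset.prod_const]
  have key : ∀ i j : Fin m, i < j → Disjoint (E i) (E j) := by
    intro i j hij
    obtain ⟨a, b, hab, hne⟩ := hcross i j hij
    rw [Finset.disjoint_left]
    intro c hci hcj
    rcases hne with ⟨x, hx⟩ | ⟨x, hx⟩
    · rw [Finset.mem_inter] at hx
      have h1 := (hmemE i c).mp hci a x hx.1
      have h2 := (hmemE j c).mp hcj b x hx.2
      exact hab.ne (h1.symm.trans h2)
    · rw [Finset.mem_inter] at hx
      have h1 := (hmemE i c).mp hci b x hx.1
      have h2 := (hmemE j c).mp hcj a x hx.2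
      exact hab.ne' (h1.symm.trans h2)
  have hEdisj : Set.PairwiseDisjoint (↑(Finset.univ : Finset (Fin m))) E := by
    intro i _ j _ hij
    rcases lt_or_gt_of_ne hij with h | h
    · exact key i j h
    · exact (key j i h).symm
  have hWnonneg : ∀ c, 0 ≤ W c := fun c => Finset.prod_nonneg fun x _ => (hp _).le
  calc ∑ i, ∏ ℓ, p ℓ ^ (A i ℓ).card
      = ∑ i, ∑ c ∈ E i, W c := Finset.sum_congr rfl (fun i _ => (hEsum i).symm)
    _ = ∑ c ∈ Finset.univ.biUnion E, W c := (Finset.sum_biUnion hEdisj).symm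
    _ ≤ ∑ c, W c :=
        Finset.sum_le_sum_of_subset_of_nonneg (Finset.subset_univ _)
          (fun c _ _ => hWnonneg c)
    _ = 1 := by
        have := Finset.prod_univ_sum (fun _ : Fin n => (Finset.univ : Finset (Fin d)))
          (fun _ j => p j)
        rw [Fintype.piFinset_univ] at this
        rw [hW, ← this]
        simp [hsum]
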